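/- Let λ ∈ ℤ and μ ∈ ℤ with μ ≥ 1 and gcd(λ,μ) = 1, let n ∈ ℕ, let ℓ be an integer with 1 ≤ ℓ ≤ n, and suppose p = μℓ + λ is prime. Assume (1-μ)·p < λ + μ and λ + μn < (μ+1)·p. Define c_j = ∏_{k=j+1}^n (kμ+λ) for 0 ≤ j ≤ n. Then ord_p(c_j) = 1 for 0 ≤ j ≤ ℓ-1, and ord_p(c_j) = 0 for ℓ ≤ j ≤ n. -/
import Mathlib

private lemma padicValInt_prod_aux (p : ℕ) [hp : Fact p.Prime] (S : Finset ℕ) (f : ℕ → ℤ)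
    (hS : ∀ k ∈ S, f k ≠ 0) :
    padicValInt p (∏ k ∈ S, f k) = ∑ k ∈ S, padicValInt p (f k) := by
  induction S using Finset.cons_induction with
  | empty => simp [padicValInt.one]
  | cons a S ha ih =>
    rw [Finset.prod_cons, Finset.sum_cons,
      padicValInt.mul (hS a (Finset.mem_cons_self a S))
        (Finset.prod_ne_zero_iff.mpr fun k hk => hS k (Finset.mem_cons_of_mem hk)),
      ih fun k hk => hS k (Finset.mem_cons_of_mem hk)]

/-- Let `λ, μ ∈ ℤ` with `μ ≥ 1` and `gcd(λ,μ) = 1`, let `1 ≤ ℓ ≤ n`, and suppose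
`p = μℓ + λ` is prime with `(1-μ)·p < λ + μ` and `λ + μn < (μ+1)·p`.  Setting
`c_j = ∏_{k=j+1}^n (kμ+λ)`, one has `ord_p(c_j) = 1` for `0 ≤ j ≤ ℓ-1` and
`ord_p(c_j) = 0` for `ℓ ≤ j ≤ n`. -/
theorem padicValRat_prod_eq
    (lam mu : ℤ) (hmu : 1 ≤ mu) (hgcd : Int.gcd lam mu = 1)
    (n l : ℕ) (hl1 : 1 ≤ l) (hln : l ≤ n)
    (p : ℕ) (hp : p.Prime) (hpeq : (p : ℤ) = mu * l + lam)
    (hb1 : (1 - mu) * (p : ℤ) < lam + mu)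
    (hb2 : lam + mu * n < (mu + 1) * (p : ℤ)) :
    (∀ j : ℕ, j < l →
        padicValRat p ((∏ k ∈ Finset.Icc (j + 1) n, ((k : ℤ) * mu + lam) : ℤ) : ℚ) = 1) ∧
    (∀ j : ℕ, l ≤ j → j ≤ n →
        padicValRat p ((∏ k ∈ Finset.Icc (j + 1) n, ((k : ℤ) * mu + lam) : ℤ) : ℚ) = 0) := by
  haveI : Fact p.Prime := ⟨hp⟩
  have hmu0 : (0:ℤ) < mu := hmu
  have hp0 : (0:ℤ) < p := Int.natCast_pos.mpr hp.pos
  have hlb : (l : ℤ) - 1 < p := by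
    have h : mu * ((l:ℤ) - 1) < mu * p := by nlinarith [hb1]
    exact lt_of_mul_lt_mul_left h hmu0.le
  have hnb : (n : ℤ) - l < p := by
    have h : mu * ((n:ℤ) - l) < mu * p := by nlinarith [hb2]
    exact lt_of_mul_lt_mul_left h hmu0.le
  have hcop : IsCoprime (p : ℤ) mu := by
    have h1 : IsCoprime lam mu := Int.isCoprime_iff_gcd_eq_one.mpr hgcd
    have h2 := h1.add_mul_left_left (l : ℤ)
    rw [hpeq]
    simpa [mul_comm, add_comm] using h2
  have hfl : ((l:ℤ) * mu + lam) = p := by rw [hpeq, mul_comm]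
  have hnd : ∀ k : ℕ, 1 ≤ k → k ≤ n → k ≠ l → ¬ (p:ℤ) ∣ ((k:ℤ) * mu + lam) := by
    intro k hk1 hkn hkl hdvd
    have h2 : (p:ℤ) ∣ ((l:ℤ) * mu + lam) := by rw [hfl]
    have hdiff : (p:ℤ) ∣ ((k:ℤ) - l) * mu := by
      have he : ((k:ℤ) - l) * mu = ((k:ℤ) * mu + lam) - ((l:ℤ) * mu + lam) := by ring
      rw [he]; exact hdvd.sub h2
    have hpd : (p:ℤ) ∣ ((k:ℤ) - l) := hcop.dvd_of_dvd_mul_right hdiff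
    have hne : (k:ℤ) - l ≠ 0 := by
      intro h; apply hkl; exact_mod_cast sub_eq_zero.mp h
    have hle : (p:ℤ) ≤ |(k:ℤ) - l| := Int.le_of_dvd (abs_pos.mpr hne) ((dvd_abs _ _).mpr hpd)
    have hkn' : (k:ℤ) ≤ n := by exact_mod_cast hkn
    have hk1' : (1:ℤ) ≤ k := by exact_mod_cast hk1
    rcases abs_cases ((k:ℤ) - l) with ⟨h, _⟩ | ⟨h, _⟩ <;> rw [h] at hle <;> linarith
  have hne0 : ∀ k : ℕ, 1 ≤ k → k ≤ n → ((k:ℤ) * mu + lam) ≠ 0 := by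
    intro k hk1 hkn
    by_cases hkl : k = l
    · subst hkl; rw [hfl]; exact_mod_cast hp.ne_zero
    · intro h0
      exact hnd k hk1 hkn hkl (h0 ▸ dvd_zero _)
  have hval : ∀ j : ℕ,
      padicValRat p ((∏ k ∈ Finset.Icc (j + 1) n, ((k : ℤ) * mu + lam) : ℤ) : ℚ)
        = (∑ k ∈ Finset.Icc (j + 1) n, padicValInt p ((k : ℤ) * mu + lam) : ℤ) := by
    intro j
    rw [padicValRat.of_int, padicValInt_prod_aux p _ _ (fun k hk => by
      rw [Finset.mem_Icc] at hk
      exact hne0 k (le_trans (Nat.le_add_left 1 j) hk.1) hk.2)]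
    push_cast
    rfl
  have hterm0 : ∀ k ∈ Finset.Icc 1 n, k ≠ l → padicValInt p ((k : ℤ) * mu + lam) = 0 := by
    intro k hk hkl
    rw [Finset.mem_Icc] at hk
    exact padicValInt.eq_zero_of_not_dvd (hnd k hk.1 hk.2 hkl)
  constructor
  · intro j hj
    rw [hval j]
    have hsum : (∑ k ∈ Finset.Icc (j + 1) n, padicValInt p ((k : ℤ) * mu + lam)) = 1 := by
      rw [Finset.sum_eq_single_of_mem l (Finset.mem_Icc.mpr ⟨hj, hln⟩)]
      · rw [hfl]; exact padicValInt.self hp.one_lt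
      · intro k hk hkl
        rw [Finset.mem_Icc] at hk
        exact hterm0 k (Finset.mem_Icc.mpr ⟨le_trans (Nat.le_add_left 1 j) hk.1, hk.2⟩) hkl
    exact_mod_cast hsum
  · intro j hlj hjn
    rw [hval j]
    have hsum : (∑ k ∈ Finset.Icc (j + 1) n, padicValInt p ((k : ℤ) * mu + lam)) = 0 := by
      apply Finset.sum_eq_zero
      intro k hk
      rw [Finset.mem_Icc] at hk
      exact hterm0 k (Finset.mem_Icc.mpr ⟨le_trans (Nat.le_add_left 1 j) hk.1, hk.2⟩)
        (by omega)
    exact_mod_cast hsum
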